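/- Let k be a commutative ring, M a free abelian group with a W-action (W finite) and suppose there exist elements χ₁, ..., χ_n ∈ k[M]^W such that for every tuple (m₁,...,m_n) of nonnegative integers, the product χ₁^{m₁}···χ_n^{m_n} equals Sym(e^λ) + Σ_{μ<λ} c_μ Sym(e^μ) with λ = Σ m_i λ_i, where the λ_i freely generate the monoid of dominant weights and < is a partial order in which every dominant weight dominates only finitely many dominant weights. Then k[M]^W is the polynomial ring k[χ₁, ..., χ_n]; i.e., the χ_i are algebraically independent and generate k[M]^W as a k-algebra. -/

import Mathlib

open scoped BigOperators

/-- The orbit sum `Sym(e^λ) = Σ_{μ ∈ W·λ} e^μ` in the group algebra `k[M]`. -/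
noncomputable def orbitSum (k : Type*) [CommRing k] {M : Type*} [AddCommGroup M]
    (W : Type*) [Group W] [DistribMulAction W M] (lam : M) :
    AddMonoidAlgebra k M :=
  ∑ᶠ mu ∈ MulAction.orbit W lam, AddMonoidAlgebra.single mu (1 : k)

/-- The `W`-invariants `k[M]^W` of the group algebra. -/
def groupAlgebraInvariants (k : Type*) [CommRing k] (M : Type*) [AddCommGroup M]
    (W : Type*) [Group W] [DistribMulAction W M] :
    Submodule k (AddMonoidAlgebra k M) where
  carrier := {f | ∀ w : W, AddMonoidAlgebra.mapDomain (fun m => w • m) f = f}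
  add_mem' := by
    intro f g hf hg w
    rw [AddMonoidAlgebra.mapDomain_add, hf w, hg w]
  zero_mem' := by
    intro w
    rw [AddMonoidAlgebra.mapDomain_zero]
  smul_mem' := by
    intro c f hf w
    rw [AddMonoidAlgebra.mapDomain_vadd, hf w]

set_option maxHeartbeats 1000000 in
set_option synthInstance.maxHeartbeats 400000 in
/-- Let `W` be a finite group acting on a free abelian group `M`, `k` a
commutative ring, `D ⊆ M` the set of dominant weights, freely generated as a monoid by
`λ₁, ..., λ_n`, and `<` a partial order on `M` in which every dominant weight dominates
only finitely many dominant weights.  Suppose `k[M]^W` has `k`-basis the orbit sums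
`Sym(e^d)`, `d ∈ D`, and `χ₁, ..., χ_n ∈ k[M]^W` satisfy, for every `(m₁, ..., m_n) ∈ ℕⁿ`,
`χ₁^{m₁} ⋯ χ_n^{m_n} = Sym(e^λ) + Σ_{μ ∈ D, μ < λ} c_μ Sym(e^μ)` with `λ = Σ m_i λ_i`.
Then `k[M]^W = k[χ₁, ..., χ_n]` is a polynomial ring: the evaluation map from
`MvPolynomial (Fin n) k` sending `X i ↦ χ_i` is injective with image exactly `k[M]^W`. -/
theorem invariants_polynomial_ring_on_fundamental_characters
    (k : Type*) [CommRing k] (M : Type*) [AddCommGroup M] [Module.Free ℤ M]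
    (W : Type*) [Group W] [Finite W] [DistribMulAction W M]
    [PartialOrder M]
    (n : ℕ) (lam : Fin n → M) (D : Set M)
    (hfree : ∀ d ∈ D, ∃! m : Fin n → ℕ, d = ∑ i, m i • lam i)
    (hsum : ∀ m : Fin n → ℕ, (∑ i, m i • lam i) ∈ D)
    (hfin : ∀ d ∈ D, {d' ∈ D | d' ≤ d}.Finite)
    (b : Module.Basis D k (groupAlgebraInvariants k M W))
    (hb : ∀ d : D, (b d : AddMonoidAlgebra k M) = orbitSum k W (d : M))
    (chi : Fin n → groupAlgebraInvariants k M W)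
    (hchi : ∀ m : Fin n → ℕ, ∃ c : M → k,
      (∀ μ, c μ ≠ 0 → μ ∈ D ∧ μ < ∑ i, m i • lam i) ∧ {μ | c μ ≠ 0}.Finite ∧
      (∏ i, (chi i : AddMonoidAlgebra k M) ^ m i) =
        orbitSum k W (∑ i, m i • lam i) + ∑ᶠ μ ∈ {μ | c μ ≠ 0}, c μ • orbitSum k W μ) :
    Function.Injective (MvPolynomial.aeval (fun i => (chi i : AddMonoidAlgebra k M)) :
        MvPolynomial (Fin n) k →ₐ[k] AddMonoidAlgebra k M) ∧
      Set.range (MvPolynomial.aeval (fun i => (chi i : AddMonoidAlgebra k M)) :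
          MvPolynomial (Fin n) k →ₐ[k] AddMonoidAlgebra k M) =
        (groupAlgebraInvariants k M W : Set (AddMonoidAlgebra k M)) := by
  classical
  -- Step 1: the key structural lemma.
  have key : ∀ m : Fin n → ℕ, ∃ z : groupAlgebraInvariants k M W,
      ((z : AddMonoidAlgebra k M) = ∏ i, (chi i : AddMonoidAlgebra k M) ^ m i) ∧
      b.repr z ⟨∑ i, m i • lam i, hsum m⟩ = 1 ∧
      ∀ d : D, b.repr z d ≠ 0 →
        d = (⟨∑ i, m i • lam i, hsum m⟩ : D) ∨ (d : M) < ∑ i, m i • lam i := by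
    intro m
    obtain ⟨c, hc1, hc2, hc3⟩ := hchi m
    have hF : ∀ μ : hc2.toFinset, (μ : M) ∈ D ∧ (μ : M) < ∑ i, m i • lam i :=
      fun μ => hc1 μ (hc2.mem_toFinset.mp μ.2)
    refine ⟨b ⟨∑ i, m i • lam i, hsum m⟩ +
      ∑ μ ∈ hc2.toFinset.attach, c μ • b ⟨(μ : M), (hF μ).1⟩, ?_, ?_, ?_⟩
    · rw [hc3]
      have h1 : ∑ᶠ μ ∈ {μ | c μ ≠ 0}, c μ • orbitSum k W μ
          = ∑ μ ∈ hc2.toFinset, c μ • orbitSum k W μ := by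
        rw [← finsum_mem_coe_finset]
        exact finsum_mem_congr hc2.coe_toFinset.symm (fun _ _ => rfl)
      have h2 : ∑ μ ∈ hc2.toFinset, c μ • orbitSum k W μ
          = ∑ μ ∈ hc2.toFinset.attach, c μ • orbitSum k W (μ : M) :=
        (Finset.sum_attach _ _).symm
      rw [h1, h2]
      push_cast [hb]
      rfl
    · rw [map_add, map_sum, Finsupp.add_apply, Module.Basis.repr_self,
        Finsupp.single_apply, if_pos rfl, Finsupp.finset_sum_apply]
      have : ∀ μ ∈ hc2.toFinset.attach,
          (b.repr (c μ • b ⟨(μ : M), (hF μ).1⟩)) ⟨∑ i, m i • lam i, hsum m⟩ = 0 := by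
        intro μ _
        rw [map_smul, Finsupp.smul_apply, Module.Basis.repr_self, Finsupp.single_apply]
        rw [if_neg, smul_zero]
        intro h
        have : (μ : M) = ∑ i, m i • lam i := congrArg Subtype.val h
        exact absurd ((hF μ).2) (by rw [this]; exact lt_irrefl _)
      rw [Finset.sum_eq_zero this, add_zero]
    · intro d hd
      by_cases hde : d = (⟨∑ i, m i • lam i, hsum m⟩ : D)
      · exact Or.inl hde
      · right
        rw [map_add, map_sum, Finsupp.add_apply, Module.Basis.repr_self,
          Finsupp.single_apply, if_neg (fun h => hde h.symm),
          Finsupp.finset_sum_apply, zero_add] at hd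
        obtain ⟨μ, -, hμ⟩ := Finset.exists_ne_zero_of_sum_ne_zero hd
        rw [map_smul, Finsupp.smul_apply, Module.Basis.repr_self, Finsupp.single_apply] at hμ
        by_cases h : (⟨(μ : M), (hF μ).1⟩ : D) = d
        · rw [← congrArg Subtype.val h]; exact (hF μ).2
        · rw [if_neg h, smul_zero] at hμ; exact absurd rfl hμ
  choose z hz1 hz2 hz3 using key
  -- Step 2: linear independence of the products.
  have indep : ∀ (s : Finset (Fin n →₀ ℕ)) (f : (Fin n →₀ ℕ) → k),
      (∑ m ∈ s, f m • z ⇑m) = 0 → ∀ m ∈ s, f m = 0 := by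
    intro s f h0
    by_contra hcon
    push_neg at hcon
    obtain ⟨m₁, hm₁s, hm₁⟩ := hcon
    set s' : Finset (Fin n →₀ ℕ) := s.filter (fun m => f m ≠ 0) with hs'
    have hs'ne : s'.Nonempty := ⟨m₁, Finset.mem_filter.mpr ⟨hm₁s, hm₁⟩⟩
    set T : Finset D := s'.image (fun m : Fin n →₀ ℕ => (⟨∑ i, m i • lam i, hsum ⇑m⟩ : D)) with hT
    obtain ⟨t, htT, htmax⟩ := T.exists_maximal (hs'ne.image _)
    obtain ⟨m₀, hm₀s', hm₀t⟩ := Finset.mem_image.mp htT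
    have hm₀ : f m₀ ≠ 0 := (Finset.mem_filter.mp hm₀s').2
    have hinj : ∀ m' : Fin n →₀ ℕ, (∑ i, m' i • lam i) = (∑ i, m₀ i • lam i) → m' = m₀ := by
      intro m' hmm
      obtain ⟨mm, -, huniq⟩ := hfree _ (hsum ⇑m₀)
      have h1 := huniq ⇑m' hmm.symm
      have h2 := huniq ⇑m₀ rfl
      exact DFunLike.coe_injective (h1.trans h2.symm)
    have heval : ∑ m ∈ s, f m • (b.repr (z ⇑m)) t = 0 := by
      have := congrArg (fun x => (b.repr x) t) h0
      simpa [map_sum, map_smul, Finsupp.finset_sum_apply, Finsupp.smul_apply] using this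
    rw [Finset.sum_eq_single_of_mem m₀ (Finset.mem_filter.mp hm₀s').1] at heval
    · rw [← hm₀t, hz2] at heval
      exact hm₀ (by simpa using heval)
    · intro m hms hne
      by_cases hfm : f m = 0
      · rw [hfm, zero_smul]
      · rcases Classical.em ((b.repr (z ⇑m)) t = 0) with h | h
        · rw [h, smul_zero]
        · exfalso
          rcases hz3 ⇑m t h with h' | h'
          · apply hne
            exact hinj _ ((congrArg Subtype.val h'.symm).trans (congrArg Subtype.val hm₀t.symm))
          · have hmT : (⟨∑ i, m i • lam i, hsum ⇑m⟩ : D) ∈ T :=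
              Finset.mem_image.mpr ⟨m, Finset.mem_filter.mpr ⟨hms, hfm⟩, rfl⟩
            have hlt : t < (⟨∑ i, m i • lam i, hsum ⇑m⟩ : D) := Subtype.mk_lt_mk.mpr h'
            exact lt_irrefl _ (lt_of_lt_of_le hlt (htmax hmT hlt.le))
  -- Step 3: aeval p is the coercion of a sum of z's.
  have haeval : ∀ p : MvPolynomial (Fin n) k,
      (MvPolynomial.aeval (fun i => (chi i : AddMonoidAlgebra k M)) p : AddMonoidAlgebra k M)
        = ((∑ m ∈ p.support, MvPolynomial.coeff m p • z ⇑m :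
            groupAlgebraInvariants k M W) : AddMonoidAlgebra k M) := by
    intro p
    rw [MvPolynomial.aeval_def, MvPolynomial.eval₂_eq']
    push_cast
    refine Finset.sum_congr rfl fun d _ => ?_
    rw [hz1 ⇑d, Algebra.smul_def]
  -- Step 4: injectivity.
  have hinj : Function.Injective
      (MvPolynomial.aeval (fun i => (chi i : AddMonoidAlgebra k M)) :
        MvPolynomial (Fin n) k →ₐ[k] AddMonoidAlgebra k M) := by
    rw [injective_iff_map_eq_zero]
    intro p hp
    rw [haeval p] at hp
    have h0 : (∑ m ∈ p.support, MvPolynomial.coeff m p • z ⇑m :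
        groupAlgebraInvariants k M W) = 0 := Subtype.ext (by simpa using hp)
    have := indep p.support (fun m => MvPolynomial.coeff m p) h0
    ext m
    by_cases hm : m ∈ p.support
    · simpa using this m hm
    · simpa using MvPolynomial.notMem_support_iff.mp hm
  refine ⟨hinj, ?_⟩
  -- Step 5: the range.
  set R : Subalgebra k (AddMonoidAlgebra k M) :=
    (MvPolynomial.aeval (fun i => (chi i : AddMonoidAlgebra k M)) :
      MvPolynomial (Fin n) k →ₐ[k] AddMonoidAlgebra k M).range with hR
  have hchiR : ∀ i, ((chi i : AddMonoidAlgebra k M)) ∈ R :=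
    fun i => ⟨MvPolynomial.X i, by simp⟩
  have hzR : ∀ m : Fin n → ℕ, ((z m : AddMonoidAlgebra k M)) ∈ R := by
    intro m
    rw [hz1 m]
    exact Subalgebra.prod_mem R fun i _ => Subalgebra.pow_mem R (hchiR i) _
  -- the rank function
  have hρ : ∀ d d' : D, (d' : M) < (d : M) →
      ({e ∈ D | e ≤ (d' : M)}.ncard < {e ∈ D | e ≤ (d : M)}.ncard) := by
    intro d d' hlt
    apply Set.ncard_lt_ncard _ (hfin _ d.2)
    constructor
    · exact fun e he => ⟨he.1, he.2.trans hlt.le⟩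
    · intro hsub
      have := (hsub ⟨d.2, le_refl _⟩).2
      exact absurd (lt_of_le_of_lt this hlt) (lt_irrefl _)
  have hbR : ∀ (N : ℕ) (d : D), {e ∈ D | e ≤ (d : M)}.ncard ≤ N →
      ((b d : AddMonoidAlgebra k M)) ∈ R := by
    intro N
    induction N with
    | zero =>
      intro d hd
      exfalso
      have : 0 < {e ∈ D | e ≤ (d : M)}.ncard :=
        (Set.ncard_pos (hfin _ d.2)).mpr ⟨d, d.2, le_refl _⟩
      omega
    | succ N ih =>
      intro d hd
      obtain ⟨m, hm, -⟩ := hfree (d : M) d.2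
      set mf : Fin n →₀ ℕ := Finsupp.equivFunOnFinite.symm m with hmf
      have hmfc : ⇑mf = m := rfl
      have hdm : d = (⟨∑ i, mf i • lam i, hsum ⇑mf⟩ : D) := by
        apply Subtype.ext
        rw [hm]
        simp [hmfc]
      set w : groupAlgebraInvariants k M W := z ⇑mf - b d with hw
      have hwlt : ∀ d' : D, b.repr w d' ≠ 0 → (d' : M) < (d : M) := by
        intro d' h
        rw [hw, map_sub, Finsupp.sub_apply, Module.Basis.repr_self, Finsupp.single_apply] at h
        by_cases hdd : d = d'
        · exfalso
          rw [if_pos hdd] at h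
          apply h
          rw [← hdd, hdm, hz2, sub_self]
        · rw [if_neg hdd, sub_zero] at h
          rcases hz3 ⇑mf d' h with h' | h'
          · exact absurd (h'.trans hdm.symm) (fun hh => hdd hh.symm)
          · have : (d : M) = ∑ i, mf i • lam i := congrArg Subtype.val hdm
            rw [this]
            exact h'
      have hwR : ((w : AddMonoidAlgebra k M)) ∈ R := by
        have hrepr : w = ∑ d' ∈ (b.repr w).support, (b.repr w) d' • b d' := by
          conv_lhs => rw [← b.linearCombination_repr w]
          rw [Finsupp.linearCombination_apply, Finsupp.sum]
        rw [hrepr]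
        push_cast
        apply Subalgebra.sum_mem
        intro d' hd'
        apply Subalgebra.smul_mem
        apply ih d'
        have := hρ d d' (hwlt d' (Finsupp.mem_support_iff.mp hd'))
        omega
      have : ((b d : AddMonoidAlgebra k M)) = (z ⇑mf : AddMonoidAlgebra k M) - w := by
        rw [hw]
        push_cast
        ring
      rw [this]
      exact Subalgebra.sub_mem R (hzR ⇑mf) hwR
  have hbR' : ∀ d : D, ((b d : AddMonoidAlgebra k M)) ∈ R :=
    fun d => hbR _ d le_rfl
  ext x
  constructor
  · rintro ⟨p, rfl⟩
    rw [haeval p]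
    exact SetLike.coe_mem _
  · intro hx
    set xS : groupAlgebraInvariants k M W := ⟨x, hx⟩ with hxS
    have hrepr : xS = ∑ d ∈ (b.repr xS).support, (b.repr xS) d • b d := by
      conv_lhs => rw [← b.linearCombination_repr xS]
      rw [Finsupp.linearCombination_apply, Finsupp.sum]
    have : x ∈ R := by
      have hxcoe : x = ((xS : AddMonoidAlgebra k M)) := rfl
      rw [hxcoe, hrepr]
      push_cast
      exact Subalgebra.sum_mem R fun d _ => Subalgebra.smul_mem R (hbR' d) _
    exact this
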